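/- Let d, m ∈ ℕ, let 0 < ε_d ≤ 0.5, 0 < ε ≤ 0.5 and 0 < δ ≤ 0.5. Let S = {(x_1,y_1),…,(x_m,y_m)} ⊆ ℝ^d × {−1,1} satisfy Assumption(ψ, φ) with ψ ≤ 0.1 and φ ≤ ε_d/(4m). If w ∈ ℝ^d is an (ε, δ)-approximate KKT point of the margin-maximization problem w.r.t. S with multipliers λ_1,…,λ_m, then max_{i∈[m]} λ_i ≤ 2.4. -/

import Mathlib

private lemma stmt_11_aux1 (a : ℝ) (h0 : 0 ≤ a) (h2 : a ^ 2 ≤ 1.1) : a ≤ 1.05 := by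
  nlinarith

private lemma stmt_11_aux2 (L : ℝ) (h : 0.775 * L ^ 2 ≤ 1.525 * L + 0.5) : L ≤ 2.4 := by
  nlinarith [sq_nonneg (L - 2.4)]

/-- For a linear predictor that is an `(ε, δ)`-approximate KKT point of the
margin-maximization problem on a nearly-orthogonal dataset, every KKT multiplier is at most
`2.4`. -/
theorem stmt_11
    (d m : ℕ)
    (ε δ εd ψ φ : ℝ)
    (hεdpos : 0 < εd) (hεdle : εd ≤ 0.5)
    (hεpos : 0 < ε) (hεle : ε ≤ 0.5)
    (hδpos : 0 < δ) (hδle : δ ≤ 0.5)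
    (hψ : ψ ≤ 0.1) (hφ : φ ≤ εd / (4 * m))
    (x : Fin m → EuclideanSpace ℝ (Fin d)) (y : Fin m → ℝ)
    (hy : ∀ i, y i = 1 ∨ y i = -1)
    (hnorm : ∀ i, 1 - ψ ≤ ‖x i‖ ^ 2 ∧ ‖x i‖ ^ 2 ≤ 1 + ψ)
    (hortho : ∀ i j, i ≠ j → |(inner ℝ (x i) (x j) : ℝ)| ≤ φ)
    (w : EuclideanSpace ℝ (Fin d)) (lam : Fin m → ℝ)
    (hlam : ∀ i, 0 ≤ lam i)
    (hstat : ‖w - ∑ i, (lam i * y i) • x i‖ ≤ ε)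
    (hcs : ∀ i, lam i * (y i * (inner ℝ w (x i) : ℝ) - 1) ≤ δ)
    (hpf : ∀ i, 1 ≤ y i * (inner ℝ w (x i) : ℝ)) :
    ∀ i, lam i ≤ 2.4 := by
  intro i
  have hm : (0:ℝ) < m := by exact_mod_cast i.pos
  obtain ⟨i₀, -, hmax⟩ := Finset.exists_max_image Finset.univ lam ⟨i, Finset.mem_univ i⟩
  have hmaxi : lam i ≤ lam i₀ := hmax i (Finset.mem_univ i)
  set Λ := lam i₀ with hΛdef
  have hΛ0 : 0 ≤ Λ := hlam i₀
  suffices h : Λ ≤ 2.4 by linarith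
  set φ' := max φ 0 with hφ'def
  have hφ'0 : 0 ≤ φ' := le_max_right _ _
  have hφ'le : φ' ≤ εd / (4 * m) := by
    apply max_le hφ
    positivity
  have hiφ' : ∀ j, j ≠ i₀ → |(inner ℝ (x j) (x i₀) : ℝ)| ≤ φ' :=
    fun j hj => (hortho j i₀ hj).trans (le_max_left _ _)
  have hyabs : ∀ j, |y j| = 1 := by
    intro j; rcases hy j with h | h <;> rw [h] <;> norm_num
  have hxub : ‖x i₀‖ ≤ 1.05 :=
    stmt_11_aux1 _ (norm_nonneg _) (by have := (hnorm i₀).2; linarith)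
  have hxlb : (0.9:ℝ) ≤ ‖x i₀‖ ^ 2 := by have := (hnorm i₀).1; linarith
  set u := ∑ j, (lam j * y j) • x j with hu
  set R := (inner ℝ (w - u) (x i₀) : ℝ) with hRdef
  set T := ∑ j ∈ Finset.univ.erase i₀, lam j * y j * (inner ℝ (x j) (x i₀) : ℝ) with hTdef
  have hRabs : |R| ≤ 0.525 := by
    have h1 : |R| ≤ ‖w - u‖ * ‖x i₀‖ := abs_real_inner_le_norm _ _
    have h2 : ‖w - u‖ * ‖x i₀‖ ≤ 0.5 * 1.05 :=
      mul_le_mul (le_trans hstat hεle) hxub (norm_nonneg _) (by norm_num)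
    calc |R| ≤ ‖w - u‖ * ‖x i₀‖ := h1
      _ ≤ 0.5 * 1.05 := h2
      _ = 0.525 := by norm_num
  have hTabs : |T| ≤ Λ / 8 := by
    have h1 : |T| ≤ ∑ j ∈ Finset.univ.erase i₀, Λ * φ' := by
      refine (Finset.abs_sum_le_sum_abs _ _).trans (Finset.sum_le_sum ?_)
      intro j hj
      have hj' : j ≠ i₀ := Finset.ne_of_mem_erase hj
      have heq : |lam j * y j * (inner ℝ (x j) (x i₀) : ℝ)|
          = lam j * |(inner ℝ (x j) (x i₀) : ℝ)| := by
        rw [abs_mul, abs_mul, hyabs j, abs_of_nonneg (hlam j)]; ring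
      rw [heq]
      exact mul_le_mul (hmax j (Finset.mem_univ j)) (hiφ' j hj') (abs_nonneg _) hΛ0
    have hcard : ((Finset.univ.erase i₀).card : ℝ) ≤ m := by
      have h := Finset.card_erase_le (a := i₀) (s := (Finset.univ : Finset (Fin m)))
      calc ((Finset.univ.erase i₀).card : ℝ)
          ≤ ((Finset.univ : Finset (Fin m)).card : ℝ) := by exact_mod_cast h
        _ = m := by simp
    have h2 : ∑ j ∈ Finset.univ.erase i₀, Λ * φ' =
        ((Finset.univ.erase i₀).card : ℝ) * (Λ * φ') := by
      rw [Finset.sum_const, nsmul_eq_mul]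
    have h3 : ((Finset.univ.erase i₀).card : ℝ) * (Λ * φ') ≤ m * (Λ * φ') :=
      mul_le_mul_of_nonneg_right hcard (by positivity)
    have h4 : (m:ℝ) * φ' ≤ εd / 4 := by
      have := mul_le_mul_of_nonneg_left hφ'le (le_of_lt hm)
      calc (m:ℝ) * φ' ≤ m * (εd / (4 * m)) := this
        _ = εd / 4 := by field_simp
    have h5 : (m:ℝ) * (Λ * φ') ≤ Λ * (εd / 4) := by
      have : (m:ℝ) * (Λ * φ') = Λ * ((m:ℝ) * φ') := by ring
      rw [this]
      exact mul_le_mul_of_nonneg_left h4 hΛ0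
    have h6 : Λ * (εd / 4) ≤ Λ / 8 := by nlinarith
    linarith
  have hdecomp : (inner ℝ w (x i₀) : ℝ) = R + Λ * y i₀ * ‖x i₀‖ ^ 2 + T := by
    have hs : (inner ℝ u (x i₀) : ℝ) = ∑ j, lam j * y j * (inner ℝ (x j) (x i₀) : ℝ) := by
      rw [hu, sum_inner]
      exact Finset.sum_congr rfl fun j _ => real_inner_smul_left _ _ _
    have hsplit : ∑ j, lam j * y j * (inner ℝ (x j) (x i₀) : ℝ)
        = T + lam i₀ * y i₀ * (inner ℝ (x i₀) (x i₀) : ℝ) :=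
      (Finset.sum_erase_add _ _ (Finset.mem_univ i₀)).symm
    have hself : (inner ℝ (x i₀) (x i₀) : ℝ) = ‖x i₀‖ ^ 2 := real_inner_self_eq_norm_sq _
    have hw : (inner ℝ w (x i₀) : ℝ) = R + (inner ℝ u (x i₀) : ℝ) := by
      rw [hRdef, inner_sub_left]; ring
    rw [hw, hs, hsplit, hself]; ring
  have hym : y i₀ * (inner ℝ w (x i₀) : ℝ) = y i₀ * R + Λ * ‖x i₀‖ ^ 2 + y i₀ * T := by
    rw [hdecomp]
    rcases hy i₀ with h | h <;> rw [h] <;> ring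
  have hyR : -(0.525 : ℝ) ≤ y i₀ * R := by
    have : |y i₀ * R| ≤ 0.525 := by rw [abs_mul, hyabs, one_mul]; exact hRabs
    have := neg_abs_le (y i₀ * R)
    linarith
  have hyT : -(Λ / 8) ≤ y i₀ * T := by
    have : |y i₀ * T| ≤ Λ / 8 := by rw [abs_mul, hyabs, one_mul]; exact hTabs
    have := neg_abs_le (y i₀ * T)
    linarith
  have hcsi := hcs i₀
  have hmarginlb : 0.9 * Λ - 0.525 - Λ / 8 ≤ y i₀ * (inner ℝ w (x i₀) : ℝ) := by
    have hx : 0.9 * Λ ≤ Λ * ‖x i₀‖ ^ 2 := by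
      have := mul_le_mul_of_nonneg_left hxlb hΛ0; linarith
    rw [hym]; linarith
  have hkey : Λ * (0.9 * Λ - 0.525 - Λ / 8) ≤ Λ + δ := by
    have h1 : Λ * (0.9 * Λ - 0.525 - Λ / 8) ≤ Λ * (y i₀ * (inner ℝ w (x i₀) : ℝ)) :=
      mul_le_mul_of_nonneg_left hmarginlb hΛ0
    linarith [h1, hcsi]
  have hkey2 : 0.775 * Λ ^ 2 ≤ 1.525 * Λ + 0.5 := by linarith [hkey, hδle]
  exact stmt_11_aux2 _ hkey2
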